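/- For the HOW function with σ ≤ √2·λ, the bias Δb(x) = x − P(x) = x·exp((λ² − x²)/σ²) is strictly decreasing for x > λ; consequently, for all x > λ the bias of the HOW proximity operator is strictly less than λ, the bias of soft-thresholding. -/

import Mathlib

theorem how_bias_decreasing (lam sigma : ℝ) (hlam : 0 < lam) (hsigma : 0 < sigma)
    (hle : sigma ≤ Real.sqrt 2 * lam) :
    StrictAntiOn (fun x : ℝ => x * Real.exp ((lam^2 - x^2)/sigma^2)) (Set.Ioi lam) ∧
    ∀ x : ℝ, lam < x → x * Real.exp ((lam^2 - x^2)/sigma^2) < lam := by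
  set f : ℝ → ℝ := fun x => x * Real.exp ((lam^2 - x^2)/sigma^2) with hf
  have hs2 : (0:ℝ) < sigma^2 := by positivity
  have hkey : sigma^2 ≤ 2 * lam^2 := by
    have h2 : (Real.sqrt 2 * lam)^2 = 2 * lam^2 := by
      rw [mul_pow, Real.sq_sqrt (by norm_num : (2:ℝ) ≥ 0)]
    calc sigma^2 ≤ (Real.sqrt 2 * lam)^2 := by
          apply pow_le_pow_left₀ hsigma.le hle
      _ = 2 * lam^2 := h2
  have hderiv : ∀ x : ℝ, HasDerivAt f (Real.exp ((lam^2 - x^2)/sigma^2) * (1 - 2*x^2/sigma^2)) x := by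
    intro x
    have hg : HasDerivAt (fun x : ℝ => (lam^2 - x^2)/sigma^2) (-2*x/sigma^2) x := by
      have : HasDerivAt (fun x : ℝ => lam^2 - x^2) (-(2*x)) x := by
        simpa using ((hasDerivAt_pow 2 x).const_sub (lam^2))
      simpa [div_eq_mul_inv, neg_mul] using this.div_const (sigma^2)
    have he : HasDerivAt (fun x : ℝ => Real.exp ((lam^2 - x^2)/sigma^2))
        (Real.exp ((lam^2 - x^2)/sigma^2) * (-2*x/sigma^2)) x := hg.exp
    have := (hasDerivAt_id x).fun_mul he
    refine this.congr_deriv ?_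
    simp only [id]
    ring
  have hneg : ∀ x ∈ interior (Set.Ici lam), deriv f x < 0 := by
    intro x hx
    rw [interior_Ici] at hx
    rw [(hderiv x).deriv]
    apply mul_neg_of_pos_of_neg (Real.exp_pos _)
    have hx2 : lam^2 < x^2 := by
      have := hx.out
      nlinarith
    have : sigma^2 < 2 * x^2 := by nlinarith
    have : (1:ℝ) < 2*x^2/sigma^2 := (one_lt_div hs2).mpr (by linarith)
    linarith
  have hcont : ContinuousOn f (Set.Ici lam) := by
    apply Continuous.continuousOn
    continuity
  have hanti : StrictAntiOn f (Set.Ici lam) :=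
    strictAntiOn_of_deriv_neg (convex_Ici lam) hcont hneg
  constructor
  · exact hanti.mono (Set.Ioi_subset_Ici le_rfl)
  · intro x hx
    have := hanti (Set.self_mem_Ici) (Set.mem_Ici.mpr hx.le) hx
    simpa [hf] using this
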